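/- Suppose Λ is an infinite bi-zero set of μ_{ρ,N} with 0 ∈ Λ and ρ is irrational with ρ^r irrational for every r ≥ 1 (i.e., ρ ∉ ℚ^{1/r} for all r ≥ 1). Then ρ is an algebraic integer. -/

import Mathlib

open Set

/-- The zero set `Z(μ̂_{ρ,N}) = { ρ^{-k} (a/N) : k ≥ 1, a ∈ ℤ, N ∤ a }`. -/
def Zset (ρ : ℝ) (N : ℕ) : Set ℝ :=
  {x | ∃ k : ℕ, 1 ≤ k ∧ ∃ a : ℤ, ¬ (N : ℤ) ∣ a ∧ x = (ρ ^ k)⁻¹ * ((a : ℝ) / N)}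

/-- `Λ` is a bi-zero set of `μ_{ρ,N}`: `0 ∈ Λ` and `(Λ − Λ) \ {0} ⊆ Z(μ̂_{ρ,N})`. -/
def IsBiZero (ρ : ℝ) (N : ℕ) (Λ : Set ℝ) : Prop :=
  0 ∈ Λ ∧ ∀ l ∈ Λ, ∀ l' ∈ Λ, l ≠ l' → l - l' ∈ Zset ρ N

open Polynomial

/-- Core algebraic lemma: if a fixed nonzero integer `a₀` can be written as `β^s * h(β)`
with `h ∈ ℤ[X]` for arbitrarily large `s`, then `β⁻¹` is an algebraic integer. -/
theorem key_integral (β : ℝ) (hβ : β ≠ 0) (a₀ : ℤ) (ha₀ : a₀ ≠ 0)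
    (H : ∀ S : ℕ, ∃ s : ℕ, ∃ h : Polynomial ℤ, S ≤ s ∧
      (Polynomial.aeval β) (X ^ s * h) = (a₀ : ℝ)) :
    IsIntegral ℤ β⁻¹ := by
  -- β is algebraic over ℚ
  have halg : IsIntegral ℚ β := by
    obtain ⟨s, h, hs, heval⟩ := H 1
    refine IsAlgebraic.isIntegral ⟨(X ^ s * h - C a₀).map (algebraMap ℤ ℚ), ?_, ?_⟩
    · intro h0
      have hc : ((X ^ s * h - C a₀).map (algebraMap ℤ ℚ)).coeff 0 = 0 := by rw [h0]; simp
      rw [coeff_map, coeff_sub, coeff_C] at hc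
      have hx : (X ^ s * h).coeff 0 = 0 := by
        have : (X : Polynomial ℤ) ∣ X ^ s * h :=
          Dvd.dvd.mul_right (dvd_pow_self X (by omega)) h
        exact X_dvd_iff.mp this
      rw [hx] at hc
      simp at hc
      exact ha₀ hc
    · rw [aeval_map_algebraMap, map_sub, heval, aeval_C]
      simp
  set μ := minpoly ℚ β with hμdef
  have hμ0 : (aeval β) μ = 0 := minpoly.aeval ℚ β
  have hμne : μ ≠ 0 := minpoly.ne_zero halg
  set m₀ := IsLocalization.integerNormalization (nonZeroDivisors ℤ) μ with hm₀def
  obtain ⟨b, hb⟩ := IsLocalization.integerNormalization_map_to_map (nonZeroDivisors ℤ) μ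
  have hbne : ((b : ℤ) : ℚ) ≠ 0 := by
    exact_mod_cast nonZeroDivisors.coe_ne_zero b
  have hb' : m₀.map (algebraMap ℤ ℚ) = C ((b : ℤ) : ℚ) * μ := by
    rw [hb, Algebra.smul_def]
    congr 1
  have hm₀ne : m₀ ≠ 0 := by
    intro h0
    rw [h0, Polynomial.map_zero] at hb'
    exact hμne (by
      have := hb'.symm
      rcases mul_eq_zero.mp this with h | h
      · exact absurd (C_eq_zero.mp h) hbne
      · exact h)
  have hcontne : (m₀.content : ℚ) ≠ 0 := by
    exact_mod_cast fun h => hm₀ne (content_eq_zero_iff.mp h)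
  set m := m₀.primPart with hmdef
  have hmprim : m.IsPrimitive := isPrimitive_primPart m₀
  -- map of m over ℚ is a nonzero constant multiple of μ
  have hmμ : m.map (algebraMap ℤ ℚ) = C ((m₀.content : ℚ)⁻¹ * ((b : ℤ) : ℚ)) * μ := by
    apply mul_left_cancel₀ (a := C (m₀.content : ℚ)) (by
      simpa [Ne, C_eq_zero] using hcontne)
    have : m₀.map (algebraMap ℤ ℚ) = C (m₀.content : ℚ) * m.map (algebraMap ℤ ℚ) := by
      conv_lhs => rw [m₀.eq_C_content_mul_primPart]
      rw [Polynomial.map_mul, map_C]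
      norm_num
      exact Or.inl rfl
    rw [← this, hb', ← mul_assoc, ← C_mul, ← mul_assoc, mul_inv_cancel₀ hcontne, one_mul]
  have hcne : ((m₀.content : ℚ)⁻¹ * ((b : ℤ) : ℚ)) ≠ 0 :=
    mul_ne_zero (inv_ne_zero hcontne) hbne
  -- m annihilates β
  have hm0 : (aeval β) m = 0 := by
    have h₁ : (aeval β) m₀ = 0 :=
      IsLocalization.integerNormalization_aeval_eq_zero (nonZeroDivisors ℤ) μ hμ0
    have h₂ : (aeval β) m₀ = (m₀.content : ℝ) * (aeval β) m := by
      conv_lhs => rw [m₀.eq_C_content_mul_primPart]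
      rw [map_mul, aeval_C]
      norm_num
      exact Or.inl rfl
    rw [h₂] at h₁
    rcases mul_eq_zero.mp h₁ with h | h
    · exact absurd (by exact_mod_cast h) (fun hh => hm₀ne (content_eq_zero_iff.mp hh))
    · exact h
  -- m divides every integer annihilator of β
  have hdvd : ∀ f : Polynomial ℤ, (aeval β) f = 0 → m ∣ f := by
    intro f hf
    by_cases hf0 : f = 0
    · simp [hf0]
    have hμdvd : μ ∣ f.map (algebraMap ℤ ℚ) :=
      minpoly.dvd ℚ β (by rwa [aeval_map_algebraMap])
    have hcfne : ((f.content : ℚ)) ≠ 0 := by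
      exact_mod_cast fun h => hf0 (content_eq_zero_iff.mp h)
    have hμprime : Prime μ :=
      (minpoly.irreducible halg).prime
    have hμdvd2 : μ ∣ (f.primPart).map (algebraMap ℤ ℚ) := by
      have : f.map (algebraMap ℤ ℚ) =
          C (f.content : ℚ) * (f.primPart).map (algebraMap ℤ ℚ) := by
        conv_lhs => rw [f.eq_C_content_mul_primPart]
        rw [Polynomial.map_mul, map_C]
        norm_num
      rw [this] at hμdvd
      rcases hμprime.2.2 _ _ hμdvd with h | h
      · exact absurd (isUnit_of_dvd_unit h (isUnit_C.mpr (isUnit_iff_ne_zero.mpr hcfne)))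
          hμprime.not_unit
      · exact h
    have hmapdvd : m.map (algebraMap ℤ ℚ) ∣ (f.primPart).map (algebraMap ℤ ℚ) := by
      have h1 : m.map (algebraMap ℤ ℚ) ∣ μ := by
        refine ⟨C ((m₀.content : ℚ)⁻¹ * ((b : ℤ) : ℚ))⁻¹, ?_⟩
        rw [hmμ, mul_comm, ← mul_assoc, ← C_mul, inv_mul_cancel₀ hcne, C_1, one_mul]
      exact h1.trans hμdvd2
    have hmP : m ∣ f.primPart :=
      hmprim.dvd_of_fraction_map_dvd_fraction_map hmapdvd
    exact (hmprim.dvd_primPart_iff_dvd hf0).mp hmP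
  -- the constant coefficient of m is nonzero
  have hc0 : m.coeff 0 ≠ 0 := by
    intro h0
    have hμc0 : μ.coeff 0 ≠ 0 := minpoly.coeff_zero_ne_zero halg hβ
    have : (m.map (algebraMap ℤ ℚ)).coeff 0 = 0 := by
      rw [coeff_map, h0]; simp
    rw [hmμ, coeff_C_mul] at this
    exact (mul_ne_zero hcne hμc0) this
  -- the constant coefficient of m is a unit
  have hunit : IsUnit (m.coeff 0) := by
    by_contra hu
    have hna : (m.coeff 0).natAbs ≠ 1 := fun h => hu (Int.isUnit_iff_natAbs_eq.mpr h)
    obtain ⟨p, hp, hpc⟩ := Int.exists_prime_and_dvd hna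
    set q := p.natAbs with hqdef
    have hq : Nat.Prime q := Int.prime_iff_natAbs_prime.mp hp
    have hq0 : ((q : ℤ)) ∣ m.coeff 0 := (Int.natAbs_dvd).mpr hpc
    haveI : Fact (Nat.Prime q) := ⟨hq⟩
    have hqZ : Prime ((q : ℤ)) := Nat.prime_iff_prime_int.mp hq
    -- u : the first coefficient of m not divisible by q
    have hex : ∃ i, ¬ ((q : ℤ)) ∣ m.coeff i := by
      by_contra hall
      push_neg at hall
      have : C ((q : ℤ)) ∣ m := (C_dvd_iff_dvd_coeff _ _).mpr hall
      exact hqZ.not_unit (hmprim _ this)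
    set u := Nat.find hex with hudef
    have hu_spec : ¬ ((q : ℤ)) ∣ m.coeff u := Nat.find_spec hex
    have hu_min : ∀ i, i < u → ((q : ℤ)) ∣ m.coeff i := by
      intro i hi
      have := Nat.find_min hex hi
      simpa using this
    have hu1 : 1 ≤ u := by
      rcases Nat.eq_zero_or_pos u with h | h
      · exact absurd (h ▸ hq0) hu_spec
      · exact h
    -- reduction of m mod q
    set φ := Int.castRingHom (ZMod q) with hφdef
    set mbar := m.map φ with hmbardef
    have hXu : (X : Polynomial (ZMod q)) ^ u ∣ mbar := by
      rw [X_pow_dvd_iff]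
      intro d hd
      rw [hmbardef, coeff_map]
      exact (ZMod.intCast_zmod_eq_zero_iff_dvd _ _).mpr (hu_min d hd)
    obtain ⟨g, hg⟩ := hXu
    have hgX : ¬ (X : Polynomial (ZMod q)) ∣ g := by
      rw [X_dvd_iff]
      intro h0
      apply hu_spec
      have : mbar.coeff u = g.coeff 0 := by
        rw [hg]
        simpa using coeff_X_pow_mul g u 0
      rw [h0, hmbardef, coeff_map] at this
      exact (ZMod.intCast_zmod_eq_zero_iff_dvd _ _).mp this
    -- key induction
    have KEY : ∀ t : ℕ, ∀ a : ℤ, ∀ s : ℕ, ∀ h₁ w : Polynomial ℤ,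
        t * u ≤ s → X ^ s * h₁ - C a = m * w → ((q : ℤ)) ^ t ∣ a := by
      intro t
      induction t with
      | zero => intro a s h₁ w _ _; simpa using one_dvd a
      | succ t ih =>
        intro a s h₁ w hs hE
        have husle : u ≤ s := le_trans (by nlinarith) hs
        have hs1 : 1 ≤ s := le_trans hu1 husle
        -- q divides a
        have hqa : ((q : ℤ)) ∣ a := by
          have hEval := congrArg (Polynomial.eval (0 : ℤ)) hE
          rw [eval_sub, eval_mul, eval_pow, eval_X, eval_C, eval_mul,
            zero_pow (by omega : s ≠ 0), zero_mul, zero_sub] at hEval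
          have : a = -(m.eval 0 * w.eval 0) := by linarith [hEval]
          rw [this, ← coeff_zero_eq_eval_zero]
          exact dvd_neg.mpr (Dvd.dvd.mul_right hq0 _)
        obtain ⟨a₁, rfl⟩ := hqa
        -- reduce mod q
        have hEbar := congrArg (Polynomial.map φ) hE
        rw [Polynomial.map_sub, Polynomial.map_mul, Polynomial.map_pow, map_X, map_C,
          Polynomial.map_mul] at hEbar
        have hCq : (φ ((q : ℤ) * a₁) : ZMod q) = 0 := by
          simp [hφdef]
        rw [hCq, map_zero, sub_zero] at hEbar
        -- cancel X^u
        have hXs : (X : Polynomial (ZMod q)) ^ s = X ^ u * X ^ (s - u) := by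
          rw [← pow_add, Nat.add_sub_cancel' husle]
        rw [hXs, ← hmbardef, hg, mul_assoc, mul_assoc] at hEbar
        have hcancel : X ^ (s - u) * (h₁.map φ) = g * (w.map φ) :=
          mul_left_cancel₀ (pow_ne_zero u X_ne_zero) hEbar
        have hXw : (X : Polynomial (ZMod q)) ^ (s - u) ∣ w.map φ :=
          prime_X.pow_dvd_of_dvd_mul_left (s - u) hgX ⟨h₁.map φ, hcancel.symm⟩
        -- decompose w
        have hmon : ((X : Polynomial ℤ) ^ (s - u)).Monic := monic_X_pow _
        have hwdec : w %ₘ (X ^ (s - u)) + X ^ (s - u) * (w /ₘ (X ^ (s - u))) = w :=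
          modByMonic_add_div w _
        have hrbar : (w %ₘ (X ^ (s - u))).map φ = 0 := by
          rw [Polynomial.map_modByMonic _ hmon]
          rw [Polynomial.map_pow, map_X]
          exact (modByMonic_eq_zero_iff_dvd (monic_X_pow _)).mpr hXw
        have hrq : C ((q : ℤ)) ∣ (w %ₘ (X ^ (s - u))) := by
          rw [C_dvd_iff_dvd_coeff]
          intro i
          have : ((w %ₘ (X ^ (s - u))).coeff i : ZMod q) = 0 := by
            have := congrArg (fun pp => Polynomial.coeff pp i) hrbar
            simpa [coeff_map] using this
          exact (ZMod.intCast_zmod_eq_zero_iff_dvd _ _).mp this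
        obtain ⟨r₁, hr₁⟩ := hrq
        set w₁ := w /ₘ (X ^ (s - u)) with hw₁def
        -- the key algebraic rearrangement
        have hXsZ : (X : Polynomial ℤ) ^ s = X ^ (s - u) * X ^ u := by
          rw [← pow_add, Nat.sub_add_cancel husle]
        have key : X ^ (s - u) * (X ^ u * h₁ - m * w₁) =
            C ((q : ℤ)) * (C a₁ + m * r₁) := by
          have hw' : w = C ((q : ℤ)) * r₁ + X ^ (s - u) * w₁ := by
            rw [← hr₁, hwdec]
          rw [map_mul] at hE
          calc X ^ (s - u) * (X ^ u * h₁ - m * w₁)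
              = X ^ s * h₁ - m * (X ^ (s - u) * w₁) := by rw [hXsZ]; ring
            _ = C ((q : ℤ)) * C a₁ + m * (C ((q : ℤ)) * r₁ + X ^ (s - u) * w₁)
                  - m * (X ^ (s - u) * w₁) := by
                  rw [← hw']
                  linear_combination hE
            _ = C ((q : ℤ)) * (C a₁ + m * r₁) := by ring
        have hCqprime : Prime (C ((q : ℤ))) := (prime_C_iff).mpr hqZ
        have hCqX : ¬ C ((q : ℤ)) ∣ (X : Polynomial ℤ) ^ (s - u) := by
          intro hdd
          have : C ((q : ℤ)) ∣ (X : Polynomial ℤ) := hCqprime.dvd_of_dvd_pow hdd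
          rw [C_dvd_iff_dvd_coeff] at this
          have h1 := this 1
          rw [coeff_X_one] at h1
          exact hqZ.not_unit (isUnit_of_dvd_one h1)
        have hdW : C ((q : ℤ)) ∣ (X ^ u * h₁ - m * w₁) := by
          have : C ((q : ℤ)) ∣ X ^ (s - u) * (X ^ u * h₁ - m * w₁) :=
            key ▸ dvd_mul_right _ _
          exact (hCqprime.2.2 _ _ this).resolve_left hCqX
        obtain ⟨W₁, hW₁⟩ := hdW
        have key2 : X ^ (s - u) * W₁ - C a₁ = m * r₁ := by
          have hcc : C ((q : ℤ)) * (X ^ (s - u) * W₁) =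
              C ((q : ℤ)) * (C a₁ + m * r₁) := by
            rw [← key, hW₁]; ring
          have := mul_left_cancel₀ hCqprime.ne_zero hcc
          linear_combination this
        have hts : t * u ≤ s - u := by
          have : (t + 1) * u = t * u + u := by ring
          omega
        have := ih a₁ (s - u) W₁ r₁ hts key2
        calc ((q : ℤ)) ^ (t + 1) = (q : ℤ) * (q : ℤ) ^ t := by ring
          _ ∣ (q : ℤ) * a₁ := mul_dvd_mul_left _ this
    -- apply KEY with large t
    set t := a₀.natAbs + 1 with htdef
    obtain ⟨s, h₁, hs, heval⟩ := H (t * u)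
    have hfann : (aeval β) (X ^ s * h₁ - C a₀) = 0 := by
      rw [map_sub, heval, aeval_C]
      simp
    obtain ⟨w, hw⟩ := hdvd _ hfann
    have hdvda₀ : ((q : ℤ)) ^ t ∣ a₀ := KEY t a₀ s h₁ w hs hw
    -- size contradiction
    have hqa : q ^ t ∣ a₀.natAbs := by
      have := Int.natAbs_dvd_natAbs.mpr hdvda₀
      simpa [Int.natAbs_pow] using this
    have hle : q ^ t ≤ a₀.natAbs :=
      Nat.le_of_dvd (Int.natAbs_pos.mpr ha₀) hqa
    have h2t : 2 ^ t ≤ q ^ t := Nat.pow_le_pow_left hq.two_le t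
    have : a₀.natAbs < 2 ^ t := by
      calc a₀.natAbs < 2 ^ a₀.natAbs := Nat.lt_two_pow_self
        _ ≤ 2 ^ t := Nat.pow_le_pow_right (by norm_num) (by omega)
    omega
  -- conclude: reverse of m gives an integral equation for β⁻¹
  letI : Invertible β := invertibleOfNonzero hβ
  have hrev0 : Polynomial.eval₂ (algebraMap ℤ ℝ) β⁻¹ m.reverse = 0 := by
    have := (Polynomial.eval₂_reverse_eq_zero_iff (algebraMap ℤ ℝ) β m).mpr (by
      rw [← Polynomial.aeval_def]; exact hm0)
    rwa [invOf_eq_inv] at this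
  have hntd : m.natTrailingDegree = 0 := natTrailingDegree_eq_zero.mpr (Or.inr hc0)
  have hlead : m.reverse.leadingCoeff = m.coeff 0 := by
    rw [reverse_leadingCoeff]
    simp [Polynomial.trailingCoeff, hntd]
  rcases Int.isUnit_iff.mp hunit with h1 | h1
  · exact ⟨m.reverse, by rw [Monic, hlead, h1], hrev0⟩
  · refine ⟨-m.reverse, ?_, ?_⟩
    · rw [Monic, leadingCoeff_neg, hlead, h1, neg_neg]
    · rw [eval₂_neg, hrev0, neg_zero]

theorem stmt_11 (ρ : ℝ) (hρ : 0 < ρ ∧ ρ < 1) (N : ℕ) (hN : 1 < N)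
    (hirr : ∀ r : ℕ, 1 ≤ r → Irrational (ρ ^ r))
    (Λ : Set ℝ) (hΛ : Λ.Infinite) (hbz : IsBiZero ρ N Λ) :
    IsIntegral ℤ ρ := by
  obtain ⟨hρ0, hρ1⟩ := hρ
  have hρne : ρ ≠ 0 := ne_of_gt hρ0
  have hNR : (N : ℝ) ≠ 0 := Nat.cast_ne_zero.mpr (by omega)
  haveI : NeZero N := ⟨by omega⟩
  -- uniqueness of the representation
  have haux : ∀ (k j : ℕ) (a b : ℤ), k < j → a ≠ 0 →
      (ρ ^ k)⁻¹ * ((a : ℝ) / N) = (ρ ^ j)⁻¹ * ((b : ℝ) / N) → False := by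
    intro k j a b hkj ha heq
    have hpow : ρ ^ (j - k) = (b : ℝ) / (a : ℝ) := by
      have h1 : (a : ℝ) * ρ ^ j = (b : ℝ) * ρ ^ k := by
        have e1 : (ρ ^ k)⁻¹ * ((a : ℝ) / N) * (ρ ^ k * ρ ^ j * N) = (a : ℝ) * ρ ^ j := by
          field_simp
        have e2 : (ρ ^ j)⁻¹ * ((b : ℝ) / N) * (ρ ^ k * ρ ^ j * N) = (b : ℝ) * ρ ^ k := by
          field_simp
        rw [← e1, heq, e2]
      have h2 : ρ ^ j = ρ ^ (j - k) * ρ ^ k := by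
        rw [← pow_add, Nat.sub_add_cancel (le_of_lt hkj)]
      rw [h2, ← mul_assoc] at h1
      have h3 : (a : ℝ) * ρ ^ (j - k) = b :=
        mul_right_cancel₀ (pow_ne_zero _ hρne) h1
      field_simp
      linarith [h3]
    have : Irrational (ρ ^ (j - k)) := hirr _ (by omega)
    apply this
    refine ⟨(b : ℚ) / (a : ℚ), ?_⟩
    rw [hpow]
    push_cast
    ring
  have huniq : ∀ (k j : ℕ) (a b : ℤ), a ≠ 0 → b ≠ 0 →
      (ρ ^ k)⁻¹ * ((a : ℝ) / N) = (ρ ^ j)⁻¹ * ((b : ℝ) / N) → k = j ∧ a = b := by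
    intro k j a b ha hb heq
    have hkj : k = j := by
      rcases lt_trichotomy k j with h | h | h
      · exact absurd (haux k j a b h ha heq) not_false
      · exact h
      · exact absurd (haux j k b a h hb heq.symm) not_false
    subst hkj
    refine ⟨rfl, ?_⟩
    have hne1 : (ρ ^ k)⁻¹ ≠ 0 := inv_ne_zero (pow_ne_zero _ hρne)
    have h1 := mul_left_cancel₀ hne1 heq
    field_simp at h1
    exact_mod_cast h1
  -- choose representations for nonzero elements of Λ
  have h1 : ∀ x : ℝ, x ∈ Λ → x ≠ 0 → ∃ k, 1 ≤ k ∧ ∃ a : ℤ, ¬ (N : ℤ) ∣ a ∧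
      x = (ρ ^ k)⁻¹ * ((a : ℝ) / N) := by
    intro x hx hx0
    have := hbz.2 x hx 0 hbz.1 hx0
    simpa [Zset, sub_zero] using this
  choose! kf hkf af haf heqf using h1
  -- generic finiteness of fibers
  have hfib : ∀ (c : ℝ) (j : ℕ) (T : Set ℝ) (A : ℝ → ℤ), T ⊆ Λ →
      (∀ x ∈ T, x - c = (ρ ^ j)⁻¹ * ((A x : ℝ) / N)) → T.Finite := by
    intro c j T A hTΛ hrep
    have hinj : Set.InjOn (fun x => ((A x : ZMod N))) T := by
      intro x hx y hy hxy
      by_contra hne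
      have hxy' : ((A x : ZMod N)) = ((A y : ZMod N)) := hxy
      have hAne : A x - A y ≠ 0 := by
        intro h0
        apply hne
        have hAxy : A x = A y := by omega
        have e1 := hrep x hx
        have e2 := hrep y hy
        rw [hAxy] at e1
        have : x - c = y - c := e1.trans e2.symm
        linarith
      have hdiff : x - y ∈ Zset ρ N := hbz.2 x (hTΛ hx) y (hTΛ hy) hne
      obtain ⟨k'', hk''1, a'', ha''N, ha''eq⟩ := hdiff
      have hxy2 : x - y = (ρ ^ j)⁻¹ * (((A x - A y : ℤ) : ℝ) / N) := by
        have e1 := hrep x hx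
        have e2 := hrep y hy
        push_cast
        have : x - y = (x - c) - (y - c) := by ring
        rw [this, e1, e2]
        ring
      have := huniq k'' j a'' (A x - A y) (fun h0 => ha''N (h0 ▸ dvd_zero _)) hAne
        (ha''eq.symm.trans hxy2)
      have hdvd : ((N : ℤ)) ∣ (A x - A y) := by
        have : ((A x - A y : ℤ) : ZMod N) = 0 := by
          push_cast
          rw [hxy']
          ring
        exact_mod_cast (ZMod.intCast_zmod_eq_zero_iff_dvd _ _).mp this
      rw [← this.2] at hdvd
      exact ha''N hdvd
    have himg : ((fun x => ((A x : ZMod N))) '' T).Finite := Set.toFinite _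
    exact Set.Finite.of_finite_image himg hinj
  -- pick a nonzero base point λ₀
  obtain ⟨lam0, hlam0Λ, hlam00⟩ : ∃ x, x ∈ Λ ∧ x ≠ 0 := by
    obtain ⟨x, hx⟩ := (hΛ.diff (Set.finite_singleton 0)).nonempty
    exact ⟨x, hx.1, hx.2⟩
  have ha₀ : af lam0 ≠ 0 := fun h0 => (haf lam0 hlam0Λ hlam00) (h0 ▸ dvd_zero _)
  -- representations of differences with λ₀
  have h2 : ∀ x : ℝ, x ∈ Λ → x ≠ lam0 → ∃ k, 1 ≤ k ∧ ∃ a : ℤ, ¬ (N : ℤ) ∣ a ∧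
      x - lam0 = (ρ ^ k)⁻¹ * ((a : ℝ) / N) := by
    intro x hx hne
    exact hbz.2 x hx lam0 hlam0Λ hne
  choose! kg hkg ag hag heqg using h2
  -- main hypothesis for the key lemma
  set k₀ := kf lam0 with hk₀def
  have H : ∀ S : ℕ, ∃ s : ℕ, ∃ h : Polynomial ℤ, S ≤ s ∧
      (Polynomial.aeval ρ⁻¹) (X ^ s * h) = ((af lam0 : ℤ) : ℝ) := by
    intro S
    set B := k₀ + S + 1 with hBdef
    -- the set of bad points is finite
    have hbad : (Λ ∩ {x | x ≠ 0 ∧ x ≠ lam0 ∧ (kf x < B ∨ kg x < B)}).Finite := by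
      have hsub : (Λ ∩ {x | x ≠ 0 ∧ x ≠ lam0 ∧ (kf x < B ∨ kg x < B)}) ⊆
          (⋃ j ∈ Finset.range B, {x | x ∈ Λ ∧ x ≠ 0 ∧ kf x = j}) ∪
          (⋃ j ∈ Finset.range B, {x | x ∈ Λ ∧ x ≠ 0 ∧ x ≠ lam0 ∧ kg x = j}) := by
        intro x hx
        obtain ⟨hxΛ, hx0, hxl, hor⟩ := hx
        rcases hor with h | h
        · left
          exact Set.mem_biUnion (Finset.mem_range.mpr h) ⟨hxΛ, hx0, rfl⟩
        · right
          exact Set.mem_biUnion (Finset.mem_range.mpr h) ⟨hxΛ, hx0, hxl, rfl⟩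
      refine Set.Finite.subset (Set.Finite.union ?_ ?_) hsub
      · apply Set.Finite.biUnion (Finset.range B).finite_toSet
        intro j _
        apply hfib 0 j _ af (fun x hx => hx.1)
        intro x hx
        rw [sub_zero, ← hx.2.2]
        exact heqf x hx.1 hx.2.1
      · apply Set.Finite.biUnion (Finset.range B).finite_toSet
        intro j _
        apply hfib lam0 j _ ag (fun x hx => hx.1)
        intro x hx
        rw [← hx.2.2.2]
        exact heqg x hx.1 hx.2.2.1
    -- pick a good point
    obtain ⟨x, hxd⟩ :=
      (hΛ.diff (hbad.union ((Set.finite_singleton 0).insert lam0))).nonempty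
    have hxΛ : x ∈ Λ := hxd.1
    have hx0 : x ≠ 0 := fun h => hxd.2 (Or.inr (by rw [h]; exact Set.mem_insert_of_mem _ rfl))
    have hxl : x ≠ lam0 := fun h => hxd.2 (Or.inr (by rw [h]; exact Set.mem_insert _ _))
    have hkbig : ¬ (kf x < B ∨ kg x < B) := fun h => hxd.2 (Or.inl ⟨hxΛ, hx0, hxl, h⟩)
    push_neg at hkbig
    obtain ⟨hkfB, hkgB⟩ := hkbig
    have h3 : (ρ ^ kf x)⁻¹ * ((af x : ℝ) / N) - (ρ ^ kf lam0)⁻¹ * ((af lam0 : ℝ) / N)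
        = (ρ ^ kg x)⁻¹ * ((ag x : ℝ) / N) := by
      rw [← heqf x hxΛ hx0, ← heqf lam0 hlam0Λ hlam00]
      exact heqg x hxΛ hxl
    set t1 := kf x - kf lam0 with ht1def
    set t2 := kg x - kf lam0 with ht2def
    have hkx : kf x = kf lam0 + t1 := by omega
    have hk2x : kg x = kf lam0 + t2 := by omega
    rw [hkx, hk2x] at h3
    have hp : ρ ^ (kf lam0) ≠ 0 := pow_ne_zero _ hρne
    have hp1 : ρ ^ t1 ≠ 0 := pow_ne_zero _ hρne
    have hp2 : ρ ^ t2 ≠ 0 := pow_ne_zero _ hρne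
    have e : ((af lam0 : ℤ) : ℝ) = (af x : ℝ) * (ρ⁻¹) ^ t1 - (ag x : ℝ) * (ρ⁻¹) ^ t2 := by
      rw [inv_pow, inv_pow]
      rw [pow_add, pow_add] at h3
      have E : (af x : ℝ) * ρ ^ t2 - ((af lam0 : ℤ) : ℝ) * (ρ ^ t1 * ρ ^ t2)
          = (ag x : ℝ) * ρ ^ t1 := by
        field_simp at h3
        have E' : ((af x : ℝ) * ρ ^ t2 - ((af lam0 : ℤ) : ℝ) * (ρ ^ t1 * ρ ^ t2)
            - (ag x : ℝ) * ρ ^ t1) * (ρ ^ (kf lam0) * ρ ^ (kf lam0) * (N : ℝ) * N) = 0 := by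
          linear_combination (ρ ^ (kf lam0) * ρ ^ (kf lam0) * (N : ℝ) * N) * h3
        rcases mul_eq_zero.mp E' with h | h
        · linarith
        · exact absurd h (mul_ne_zero (mul_ne_zero (mul_ne_zero hp hp) hNR) hNR)
      field_simp
      linear_combination -E
    set s := min t1 t2 with hsdef
    have hsle1 : s ≤ t1 := min_le_left _ _
    have hsle2 : s ≤ t2 := min_le_right _ _
    have hSs : S ≤ s := by omega
    refine ⟨s, C (af x) * X ^ (t1 - s) - C (ag x) * X ^ (t2 - s), hSs, ?_⟩
    have heval : (Polynomial.aeval ρ⁻¹) (X ^ s * (C (af x) * X ^ (t1 - s) - C (ag x) * X ^ (t2 - s)))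
        = (af x : ℝ) * (ρ⁻¹) ^ (s + (t1 - s)) - (ag x : ℝ) * (ρ⁻¹) ^ (s + (t2 - s)) := by
      simp only [map_mul, map_sub, map_pow, aeval_X, aeval_C, algebraMap_int_eq, eq_intCast, map_intCast]
      push_cast
      ring
    rw [heval, Nat.add_sub_cancel' hsle1, Nat.add_sub_cancel' hsle2]
    linarith [e]
  have hkey := key_integral ρ⁻¹ (inv_ne_zero hρne) (af lam0) ha₀ H
  rwa [inv_inv] at hkey
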